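/- Let h > m ≥ 1 and p ≥ 2h. Then the ratio of the number of S-graphs with m distinct edges to the main term satisfies m^(h−m)·Σ_{r=0}^{m−1}(p)_{m−r}(q)_{r+1}(1/(r+1))C(m,r)C(m−1,r) ≤ (h/(p−h))^(h−m) · Σ_{r=0}^{h−1}(p)_{h−r}(q)_{r+1}(1/(r+1))C(h,r)C(h−1,r), and moreover Σ_{m=1}^{h−1}(h/(p−h))^(h−m) ≤ h/(p−2h). -/

import Mathlib

open Finset

lemma desc_aux (p k : ℕ) : ∀ t, (p - (k + t)) ^ t * p.descFactorial k ≤ p.descFactorial (k + t) := by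
  intro t
  induction t with
  | zero => simp
  | succ t ih =>
    have h1 : p - (k + (t + 1)) ≤ p - (k + t) := by omega
    calc (p - (k + (t + 1))) ^ (t + 1) * p.descFactorial k
        = (p - (k + (t + 1))) * ((p - (k + (t + 1))) ^ t * p.descFactorial k) := by ring
      _ ≤ (p - (k + t)) * ((p - (k + t)) ^ t * p.descFactorial k) :=
          Nat.mul_le_mul h1 (Nat.mul_le_mul_right _ (Nat.pow_le_pow_left h1 t))
      _ ≤ (p - (k + t)) * p.descFactorial (k + t) := Nat.mul_le_mul_left _ ih
      _ = p.descFactorial (k + t + 1) := (Nat.descFactorial_succ p (k + t)).symm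

/-- For `h > m ≥ 1` and `p > 2h` (with `p ≥ q ≥ 1`): the contribution of S-graphs with `m`
distinct edges is dominated by `(h/(p−h))^(h−m)` times the main term, and the geometric sum
`Σ_{m=1}^{h−1} (h/(p−h))^(h−m)` is at most `h/(p−2h)`. -/
theorem stmt_13 (p q h m : ℕ) (hq : 1 ≤ q) (hpq : q ≤ p) (hm : 1 ≤ m) (hmh : m < h)
    (hp : 2 * h < p) :
    ((m : ℝ) ^ (h - m) *
        ∑ r ∈ Finset.range m,
          (p.descFactorial (m - r) : ℝ) * (q.descFactorial (r + 1) : ℝ) * (1 / (r + 1 : ℝ)) *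
            (m.choose r : ℝ) * ((m - 1).choose r : ℝ)
      ≤ ((h : ℝ) / ((p : ℝ) - h)) ^ (h - m) *
          ∑ r ∈ Finset.range h,
            (p.descFactorial (h - r) : ℝ) * (q.descFactorial (r + 1) : ℝ) * (1 / (r + 1 : ℝ)) *
              (h.choose r : ℝ) * ((h - 1).choose r : ℝ)) ∧
    (∑ m' ∈ Finset.Icc 1 (h - 1), ((h : ℝ) / ((p : ℝ) - h)) ^ (h - m')
      ≤ (h : ℝ) / ((p : ℝ) - 2 * h)) := by
  have hhp : h < p := by omega
  have hph : (0 : ℝ) < (p : ℝ) - h := by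
    have : (h : ℝ) < p := by exact_mod_cast hhp
    linarith
  have hcast : ((p : ℝ) - h) = ((p - h : ℕ) : ℝ) := by
    push_cast [Nat.cast_sub hhp.le]; ring
  constructor
  · -- first claim
    set c := h - m with hc
    have hpow : (0 : ℝ) < ((p : ℝ) - h) ^ c := pow_pos hph c
    rw [div_pow, div_mul_eq_mul_div, le_div_iff₀ hpow]
    rw [Finset.mul_sum, Finset.sum_mul, Finset.mul_sum]
    calc ∑ r ∈ Finset.range m,
          (m : ℝ) ^ c * ((p.descFactorial (m - r) : ℝ) * (q.descFactorial (r + 1) : ℝ) *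
            (1 / (r + 1 : ℝ)) * (m.choose r : ℝ) * ((m - 1).choose r : ℝ)) * ((p : ℝ) - h) ^ c
        ≤ ∑ r ∈ Finset.range m,
          (h : ℝ) ^ c * ((p.descFactorial (h - r) : ℝ) * (q.descFactorial (r + 1) : ℝ) *
            (1 / (r + 1 : ℝ)) * (h.choose r : ℝ) * ((h - 1).choose r : ℝ)) := by
          apply Finset.sum_le_sum
          intro r hr
          have hrm : r < m := Finset.mem_range.mp hr
          have key : ((p - h) ^ c * m ^ c) *
              (p.descFactorial (m - r) * m.choose r * (m - 1).choose r) ≤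
              h ^ c * (p.descFactorial (h - r) * h.choose r * (h - 1).choose r) := by
            have h1 : (p - h) ^ c * p.descFactorial (m - r) ≤ p.descFactorial (h - r) := by
              have haux := desc_aux p (m - r) c
              have e : m - r + c = h - r := by omega
              rw [e] at haux
              calc (p - h) ^ c * p.descFactorial (m - r)
                  ≤ (p - (h - r)) ^ c * p.descFactorial (m - r) :=
                    Nat.mul_le_mul_right _ (Nat.pow_le_pow_left (by omega) c)
                _ ≤ p.descFactorial (h - r) := haux
            have h2 : m ^ c ≤ h ^ c := Nat.pow_le_pow_left hmh.le c
            have h3 : m.choose r ≤ h.choose r := Nat.choose_le_choose r hmh.le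
            have h4 : (m - 1).choose r ≤ (h - 1).choose r := Nat.choose_le_choose r (by omega)
            calc ((p - h) ^ c * m ^ c) *
                (p.descFactorial (m - r) * m.choose r * (m - 1).choose r)
                = ((p - h) ^ c * p.descFactorial (m - r)) *
                  (m ^ c * (m.choose r * (m - 1).choose r)) := by ring
              _ ≤ p.descFactorial (h - r) * (h ^ c * (h.choose r * (h - 1).choose r)) :=
                  Nat.mul_le_mul h1 (Nat.mul_le_mul h2 (Nat.mul_le_mul h3 h4))
              _ = h ^ c * (p.descFactorial (h - r) * h.choose r * (h - 1).choose r) := by ring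
          have keyR : (((p - h : ℕ) : ℝ) ^ c * (m : ℝ) ^ c) *
              ((p.descFactorial (m - r) : ℝ) * (m.choose r : ℝ) * ((m - 1).choose r : ℝ)) ≤
              (h : ℝ) ^ c *
              ((p.descFactorial (h - r) : ℝ) * (h.choose r : ℝ) * ((h - 1).choose r : ℝ)) := by
            exact_mod_cast key
          have hQ : (0 : ℝ) ≤ (q.descFactorial (r + 1) : ℝ) * (1 / (r + 1 : ℝ)) := by positivity
          calc (m : ℝ) ^ c * ((p.descFactorial (m - r) : ℝ) * (q.descFactorial (r + 1) : ℝ) *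
                (1 / (r + 1 : ℝ)) * (m.choose r : ℝ) * ((m - 1).choose r : ℝ)) * ((p : ℝ) - h) ^ c
              = ((((p - h : ℕ) : ℝ)) ^ c * (m : ℝ) ^ c *
                ((p.descFactorial (m - r) : ℝ) * (m.choose r : ℝ) * ((m - 1).choose r : ℝ))) *
                ((q.descFactorial (r + 1) : ℝ) * (1 / (r + 1 : ℝ))) := by rw [hcast]; ring
            _ ≤ ((h : ℝ) ^ c *
                ((p.descFactorial (h - r) : ℝ) * (h.choose r : ℝ) * ((h - 1).choose r : ℝ))) *
                ((q.descFactorial (r + 1) : ℝ) * (1 / (r + 1 : ℝ))) :=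
                mul_le_mul_of_nonneg_right keyR hQ
            _ = (h : ℝ) ^ c * ((p.descFactorial (h - r) : ℝ) * (q.descFactorial (r + 1) : ℝ) *
                (1 / (r + 1 : ℝ)) * (h.choose r : ℝ) * ((h - 1).choose r : ℝ)) := by ring
      _ ≤ ∑ r ∈ Finset.range h,
          (h : ℝ) ^ c * ((p.descFactorial (h - r) : ℝ) * (q.descFactorial (r + 1) : ℝ) *
            (1 / (r + 1 : ℝ)) * (h.choose r : ℝ) * ((h - 1).choose r : ℝ)) := by
          apply Finset.sum_le_sum_of_subset_of_nonneg
          · exact Finset.range_subset_range.mpr hmh.le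
          · intro i _ _
            positivity
  · -- second claim
    set t : ℝ := (h : ℝ) / ((p : ℝ) - h) with htdef
    have hp2h : (0 : ℝ) < (p : ℝ) - 2 * h := by
      have : ((2 * h : ℕ) : ℝ) < p := by exact_mod_cast hp
      push_cast at this; linarith
    have ht0 : 0 < t := by
      apply div_pos _ hph
      have : (0 : ℕ) < h := by omega
      exact_mod_cast this
    have ht1 : t < 1 := by
      rw [div_lt_one hph]
      linarith
    have hIcc : Finset.Icc 1 (h - 1) = Finset.Ico 1 h := by
      rw [← Finset.Ico_add_one_right_eq_Icc]
      congr 1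
      omega
    have hre : ∑ m' ∈ Finset.Icc 1 (h - 1), t ^ (h - m') = ∑ j ∈ Finset.Icc 1 (h - 1), t ^ j := by
      apply Finset.sum_nbij' (fun m' => h - m') (fun j => h - j)
      · intro a ha
        simp only [Finset.mem_Icc] at ha ⊢
        omega
      · intro a ha
        simp only [Finset.mem_Icc] at ha ⊢
        omega
      · intro a ha
        simp only [Finset.mem_Icc] at ha
        omega
      · intro a ha
        simp only [Finset.mem_Icc] at ha
        omega
      · intro a _
        rfl
    rw [hre, hIcc]
    have hgeom : ∑ j ∈ Finset.Ico 1 h, t ^ j = (∑ j ∈ Finset.range h, t ^ j) - 1 := by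
      rw [Finset.sum_Ico_eq_sub _ (by omega : 1 ≤ h)]
      simp
    rw [hgeom, geom_sum_eq ht1.ne h]
    have h1t : (0 : ℝ) < 1 - t := by linarith
    have e1 : (t ^ h - 1) / (t - 1) = (1 - t ^ h) / (1 - t) := by
      rw [div_eq_div_iff (by intro hh; apply ht1.ne; linarith) h1t.ne']
      ring
    rw [e1]
    have e2 : (1 - t ^ h) / (1 - t) - 1 = (t - t ^ h) / (1 - t) := by
      field_simp
      ring
    rw [e2, div_le_div_iff₀ h1t hp2h]
    have htm : t * ((p : ℝ) - h) = h := by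
      rw [htdef, div_mul_cancel₀ _ hph.ne']
    have hth : 0 ≤ t ^ h * ((p : ℝ) - 2 * h) := mul_nonneg (pow_nonneg ht0.le h) hp2h.le
    nlinarith [htm, hth, ht0.le]
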